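/- Let C and C' be nontrivial codes in the Hamming graphs H(n,q) and H(n',q') respectively. If the product code C × C' is completely regular in the Cartesian product graph H(n,q) × H(n',q'), then both C and C' are completely regular codes in their respective Hamming graphs. -/

import Mathlib

open SimpleGraph

/-- The Hamming graph on `Fin n → Q`: words adjacent iff they differ in one coordinate. -/
def hammingGraph (n : ℕ) (Q : Type*) [DecidableEq Q] : SimpleGraph (Fin n → Q) where
  Adj x y := hammingDist x y = 1
  symm := ⟨fun x y h => by show hammingDist y x = 1; rw [hammingDist_comm]; exact h⟩
  loopless := ⟨fun x h => by have h : hammingDist x x = 1 := h; rw [hammingDist_self] at h; exact absurd h.symm one_ne_zero⟩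

/-- Distance from a vertex to a code, via graph distance. -/
noncomputable def distToCode {V : Type*} (G : SimpleGraph V) (C : Set V) (x : V) : ℕ :=
  sInf {d | ∃ c ∈ C, G.dist x c = d}

/-- The `i`-th cell of the distance partition of a code. -/
noncomputable def codeCell {V : Type*} (G : SimpleGraph V) (C : Set V) (i : ℕ) : Set V :=
  {x | distToCode G C x = i}

/-- The number of neighbors of `x` lying in `S`. -/
noncomputable def nbrCount {V : Type*} (G : SimpleGraph V) (x : V) (S : Set V) : ℕ :=
  (G.neighborSet x ∩ S).ncard

/-- Covering radius of a code. -/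
noncomputable def covRad {V : Type*} (G : SimpleGraph V) (C : Set V) : ℕ :=
  sSup {d | ∃ x, distToCode G C x = d}

/-- A code is completely regular if its distance partition is equitable. -/
def IsCompRegCode {V : Type*} (G : SimpleGraph V) (C : Set V) : Prop :=
  ∀ i j : ℕ, ∀ x ∈ codeCell G C i, ∀ y ∈ codeCell G C i,
    nbrCount G x (codeCell G C j) = nbrCount G y (codeCell G C j)

/-- Intersection numbers `γ, α, β` of a code with covering radius `ρ`. -/
def HasIntNums {V : Type*} (G : SimpleGraph V) (C : Set V) (ρ : ℕ) (γ α β : ℕ → ℕ) : Prop :=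
  γ 0 = 0 ∧ β ρ = 0 ∧
  ∀ i ≤ ρ, ∀ x ∈ codeCell G C i,
    (1 ≤ i → nbrCount G x (codeCell G C (i-1)) = γ i) ∧
    nbrCount G x (codeCell G C i) = α i ∧
    (i < ρ → nbrCount G x (codeCell G C (i+1)) = β i)

/-- Equitable partition of the vertex set of a graph. -/
def IsEquitable {V : Type*} (G : SimpleGraph V) (Pa : Set (Set V)) : Prop :=
  ∀ P ∈ Pa, ∀ P' ∈ Pa, ∀ x ∈ P, ∀ y ∈ P, nbrCount G x P' = nbrCount G y P'

/-- Quotient graph of a graph by a partition of its vertex set. -/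
def quotientGraph {V : Type*} (G : SimpleGraph V) (Pa : Set (Set V)) : SimpleGraph Pa where
  Adj P P' := P ≠ P' ∧ ∃ x ∈ (P : Set V), ∃ y ∈ (P' : Set V), G.Adj x y
  symm := ⟨by
    rintro P P' ⟨hne, x, hx, y, hy, hxy⟩
    exact ⟨hne.symm, y, hy, x, hx, hxy.symm⟩⟩
  loopless := ⟨by rintro P ⟨hne, -⟩; exact hne rfl⟩

/-- Completely regular partition with common intersection numbers. -/
def IsCompRegPartition {V : Type*} (G : SimpleGraph V) (Pa : Set (Set V))
    (ρ : ℕ) (γ α β : ℕ → ℕ) : Prop :=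
  Setoid.IsPartition Pa ∧ IsEquitable G Pa ∧
    ∀ P ∈ Pa, IsCompRegCode G P ∧ covRad G P = ρ ∧ HasIntNums G P ρ γ α β

/-- Distance-regular graph of diameter `D` with intersection arrays `b`, `c`. -/
def IsDistRegular {V : Type*} (G : SimpleGraph V) (D : ℕ) (b c : ℕ → ℕ) : Prop :=
  G.Connected ∧ (∀ x y : V, G.dist x y ≤ D) ∧ (∃ x y : V, G.dist x y = D) ∧
  ∀ i ≤ D, ∀ x y : V, G.dist x y = i →
    (1 ≤ i → nbrCount G y {z | G.dist x z = i - 1} = c i) ∧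
    (i < D → nbrCount G y {z | G.dist x z = i + 1} = b i)

/-- The tridiagonal quotient matrix of a completely regular code. -/
noncomputable def quotMatrix (ρ : ℕ) (γ α β : ℕ → ℕ) : Matrix (Fin (ρ+1)) (Fin (ρ+1)) ℝ :=
  Matrix.of fun i j =>
    if (j : ℕ) + 1 = (i : ℕ) then (γ (i : ℕ) : ℝ)
    else if (i : ℕ) = (j : ℕ) then (α (i : ℕ) : ℝ)
    else if (i : ℕ) + 1 = (j : ℕ) then (β (i : ℕ) : ℝ)
    else 0


section MainHelpers

variable {α β : Type*} {G : SimpleGraph α} {H : SimpleGraph β}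

private lemma distToCode_le' {C : Set α} {c : α} (hc : c ∈ C) (x : α) :
    distToCode G C x ≤ G.dist x c := Nat.sInf_le ⟨c, hc, rfl⟩

private lemma distToCode_of_mem {C : Set α} {c : α} (hc : c ∈ C) :
    distToCode G C c = 0 :=
  Nat.eq_zero_of_le_zero ((distToCode_le' hc c).trans (le_of_eq (SimpleGraph.dist_self)))

private lemma distToCode_spec {C : Set α} (hC : C.Nonempty) (x : α) :
    ∃ c ∈ C, G.dist x c = distToCode G C x := by
  have hne : {d | ∃ c ∈ C, G.dist x c = d}.Nonempty := ⟨_, hC.choose, hC.choose_spec, rfl⟩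
  exact Nat.sInf_mem hne

private lemma adj_dist_le {a b c : α} (h : G.Adj a b) :
    G.dist a c ≤ G.dist b c + 1 := by
  by_cases hr : G.Reachable b c
  · obtain ⟨w, hw⟩ := hr.exists_walk_length_eq_dist
    calc G.dist a c ≤ (w.cons h).length := SimpleGraph.dist_le _
    _ = w.length + 1 := SimpleGraph.Walk.length_cons _ _
    _ = G.dist b c + 1 := by rw [hw]
  · have hr' : ¬ G.Reachable a c := fun h' => hr ((h.symm.reachable).trans h')
    rw [SimpleGraph.dist_eq_zero_of_not_reachable hr']
    exact Nat.zero_le _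

private lemma boxProd_walk_ge {p q : α × β} (w : (G □ H).Walk p q) :
    G.dist p.1 q.1 + H.dist p.2 q.2 ≤ w.length := by
  induction w with
  | nil => simp [SimpleGraph.dist_self]
  | @cons u v r h w ih =>
    rw [SimpleGraph.Walk.length_cons]
    rcases h with ⟨hG, he⟩ | ⟨hH, he⟩
    · calc G.dist u.1 r.1 + H.dist u.2 r.2 ≤ (G.dist v.1 r.1 + 1) + H.dist v.2 r.2 := by
            rw [he]; exact Nat.add_le_add_right (adj_dist_le hG) _
      _ = (G.dist v.1 r.1 + H.dist v.2 r.2) + 1 := by omega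
      _ ≤ w.length + 1 := Nat.add_le_add_right ih 1
    · calc G.dist u.1 r.1 + H.dist u.2 r.2 ≤ G.dist v.1 r.1 + (H.dist v.2 r.2 + 1) := by
            rw [he]; exact Nat.add_le_add_left (adj_dist_le hH) _
      _ = (G.dist v.1 r.1 + H.dist v.2 r.2) + 1 := by omega
      _ ≤ w.length + 1 := Nat.add_le_add_right ih 1

private lemma boxProd_dist (hG : G.Connected) (hH : H.Connected) (p q : α × β) :
    (G □ H).dist p q = G.dist p.1 q.1 + H.dist p.2 q.2 := by
  apply le_antisymm
  · obtain ⟨w1, h1⟩ := hG.exists_walk_length_eq_dist p.1 q.1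
    obtain ⟨w2, h2⟩ := hH.exists_walk_length_eq_dist p.2 q.2
    have hle := SimpleGraph.dist_le ((w1.boxProdLeft H p.2).append (w2.boxProdRight G q.1))
    have hlen : ((w1.boxProdLeft H p.2).append (w2.boxProdRight G q.1)).length
        = w1.length + w2.length := by
      rw [SimpleGraph.Walk.length_append]
      congr 1 <;> exact SimpleGraph.Walk.length_map _ _
    rw [hlen] at hle
    simpa [SimpleGraph.Walk.boxProdLeft, SimpleGraph.Walk.boxProdRight,
      SimpleGraph.Walk.length_append, SimpleGraph.Walk.length_map, h1, h2] using hle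
  · obtain ⟨w, hw⟩ := (hG.boxProd hH).exists_walk_length_eq_dist p q
    rw [← hw]; exact boxProd_walk_ge w

private lemma distToCode_boxProd (hG : G.Connected) (hH : H.Connected)
    {C : Set α} {C' : Set β} (hC : C.Nonempty) (hC' : C'.Nonempty) (x : α) (x' : β) :
    distToCode (G □ H) (C ×ˢ C') (x, x') = distToCode G C x + distToCode H C' x' := by
  apply le_antisymm
  · obtain ⟨c, hc, hdc⟩ := distToCode_spec (G := G) hC x
    obtain ⟨c', hc', hdc'⟩ := distToCode_spec (G := H) hC' x'
    have := distToCode_le' (G := G □ H) (Set.mk_mem_prod hc hc') (x, x')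
    rwa [boxProd_dist hG hH, hdc, hdc'] at this
  · have hne : {d | ∃ c ∈ C ×ˢ C', (G □ H).dist (x, x') c = d}.Nonempty :=
      ⟨_, (hC.choose, hC'.choose), ⟨hC.choose_spec, hC'.choose_spec⟩, rfl⟩
    apply le_csInf hne
    rintro d ⟨⟨c, c'⟩, hcc, rfl⟩
    rw [boxProd_dist hG hH]
    exact Nat.add_le_add (distToCode_le' hcc.1 x) (distToCode_le' hcc.2 x')


variable {α β : Type*} {G : SimpleGraph α} {H : SimpleGraph β}

private lemma nbr_decomp [Fintype α] [Fintype β] (x : α) (x' : β) (S : Set (α × β)) :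
    nbrCount (G □ H) (x, x') S =
      (G.neighborSet x ∩ {u | (u, x') ∈ S}).ncard
        + (H.neighborSet x' ∩ {u' | (x, u') ∈ S}).ncard := by
  unfold nbrCount
  rw [SimpleGraph.neighborSet_boxProd, Set.union_inter_distrib_right]
  rw [Set.ncard_union_eq]
  · congr 1
    · have himg : (G.neighborSet x ×ˢ {x'} : Set (α × β)) ∩ S
          = (fun u => (u, x')) '' (G.neighborSet x ∩ {u | (u, x') ∈ S}) := by
        ext ⟨a, b⟩
        simp only [Set.mem_inter_iff, Set.mem_prod, Set.mem_singleton_iff, Set.mem_image,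
          Set.mem_setOf_eq, SimpleGraph.mem_neighborSet]
        constructor
        · rintro ⟨⟨ha, rfl⟩, hS⟩; exact ⟨a, ⟨ha, hS⟩, rfl⟩
        · rintro ⟨u, ⟨hu, hS⟩, heq⟩; cases heq; exact ⟨⟨hu, rfl⟩, hS⟩
      rw [himg, Set.ncard_image_of_injective _ (fun a b h => congrArg Prod.fst h)]
    · have himg : (({x} : Set α) ×ˢ H.neighborSet x' : Set (α × β)) ∩ S
          = (fun u' => (x, u')) '' (H.neighborSet x' ∩ {u' | (x, u') ∈ S}) := by
        ext ⟨a, b⟩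
        simp only [Set.mem_inter_iff, Set.mem_prod, Set.mem_singleton_iff, Set.mem_image,
          Set.mem_setOf_eq, SimpleGraph.mem_neighborSet]
        constructor
        · rintro ⟨⟨rfl, hb⟩, hS⟩; exact ⟨b, ⟨hb, hS⟩, rfl⟩
        · rintro ⟨u, ⟨hu, hS⟩, heq⟩; cases heq; exact ⟨⟨rfl, hu⟩, hS⟩
      rw [himg, Set.ncard_image_of_injective _ (fun a b h => congrArg Prod.snd h)]
  · rw [Set.disjoint_left]
    rintro ⟨a, b⟩ ⟨⟨ha, hb⟩, -⟩ ⟨⟨ha', -⟩, -⟩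
    exact (G.ne_of_adj ha) (by simpa using ha'.symm)

private lemma left_factor [Fintype α] [Fintype β]
    (hG : G.Connected) (hH : H.Connected) {C : Set α} {C' : Set β}
    (hC : C.Nonempty) {c₀' : β} (hc₀' : c₀' ∈ C')
    (hprod : IsCompRegCode (G □ H) (C ×ˢ C')) : IsCompRegCode G C := by
  have hC' : C'.Nonempty := ⟨c₀', hc₀'⟩
  intro i j x hx y hy
  have hx' : distToCode G C x = i := hx
  have hy' : distToCode G C y = i := hy
  have h0 : distToCode H C' c₀' = 0 := distToCode_of_mem hc₀'
  have hcell : ∀ z : α, ∀ k : ℕ, ((z, c₀') ∈ codeCell (G □ H) (C ×ˢ C') k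
      ↔ distToCode G C z = k) := by
    intro z k
    show distToCode (G □ H) (C ×ˢ C') (z, c₀') = k ↔ _
    rw [distToCode_boxProd hG hH hC hC', h0, add_zero]
  have key := hprod i j (x, c₀') ((hcell x i).mpr hx') (y, c₀') ((hcell y i).mpr hy')
  rw [nbr_decomp, nbr_decomp] at key
  unfold nbrCount
  have hset : ∀ z : α, distToCode G C z = i →
      ({u' | (z, u') ∈ codeCell (G □ H) (C ×ˢ C') j} : Set β)
        = {u' | i + distToCode H C' u' = j} := by
    intro z hz
    ext u'
    show distToCode (G □ H) (C ×ˢ C') (z, u') = j ↔ _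
    rw [distToCode_boxProd hG hH hC hC', hz]; exact Iff.rfl
  have hfst : ∀ z : α, ({u | (u, c₀') ∈ codeCell (G □ H) (C ×ˢ C') j} : Set α)
      = codeCell G C j := by
    intro z
    ext u
    exact hcell u j
  rw [hfst x, hset x hx', hset y hy'] at key
  exact Nat.add_right_cancel key

private lemma right_factor [Fintype α] [Fintype β]
    (hG : G.Connected) (hH : H.Connected) {C : Set α} {C' : Set β}
    {c₀ : α} (hc₀ : c₀ ∈ C) (hC' : C'.Nonempty)
    (hprod : IsCompRegCode (G □ H) (C ×ˢ C')) : IsCompRegCode H C' := by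
  have hC : C.Nonempty := ⟨c₀, hc₀⟩
  intro i j x hx y hy
  have hx' : distToCode H C' x = i := hx
  have hy' : distToCode H C' y = i := hy
  have h0 : distToCode G C c₀ = 0 := distToCode_of_mem hc₀
  have hcell : ∀ z : β, ∀ k : ℕ, ((c₀, z) ∈ codeCell (G □ H) (C ×ˢ C') k
      ↔ distToCode H C' z = k) := by
    intro z k
    show distToCode (G □ H) (C ×ˢ C') (c₀, z) = k ↔ _
    rw [distToCode_boxProd hG hH hC hC', h0, zero_add]
  have key := hprod i j (c₀, x) ((hcell x i).mpr hx') (c₀, y) ((hcell y i).mpr hy')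
  rw [nbr_decomp, nbr_decomp] at key
  unfold nbrCount
  have hset : ∀ z : β, distToCode H C' z = i →
      ({u | (u, z) ∈ codeCell (G □ H) (C ×ˢ C') j} : Set α)
        = {u | distToCode G C u + i = j} := by
    intro z hz
    ext u
    show distToCode (G □ H) (C ×ˢ C') (u, z) = j ↔ _
    rw [distToCode_boxProd hG hH hC hC', hz]; exact Iff.rfl
  have hsnd : ∀ z : β, ({u' | (c₀, u') ∈ codeCell (G □ H) (C ×ˢ C') j} : Set β)
      = codeCell H C' j := by
    intro z
    ext u'
    exact hcell u' j
  rw [hsnd x, hset x hx', hset y hy'] at key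
  exact Nat.add_left_cancel key

private lemma hamming_reach_aux {n q : ℕ} (d : ℕ) :
    ∀ x y : Fin n → Fin q, hammingDist x y = d → (hammingGraph n (Fin q)).Reachable x y := by
  induction d with
  | zero =>
    intro x y hd
    rw [hammingDist_eq_zero] at hd
    exact hd ▸ SimpleGraph.Reachable.refl x
  | succ d ih =>
    intro x y hd
    have hne : x ≠ y := by
      intro h; subst h; rw [hammingDist_self] at hd; exact Nat.succ_ne_zero d hd.symm
    obtain ⟨i, hi⟩ := Function.ne_iff.mp hne
    set x1 := Function.update x i (y i) with hx1
    have hadj : (hammingGraph n (Fin q)).Adj x x1 := by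
      show hammingDist x x1 = 1
      rw [hammingDist, Finset.card_eq_one]
      refine ⟨i, ?_⟩
      ext j
      simp only [Finset.mem_filter, Finset.mem_univ, true_and, Finset.mem_singleton]
      constructor
      · intro h
        by_contra hji
        exact h (by simp [hx1, Function.update_of_ne hji])
      · rintro rfl
        simpa [hx1, Function.update_self] using hi
    have hstep : hammingDist x1 y = d := by
      rw [hammingDist] at hd ⊢
      have hmem : i ∈ Finset.univ.filter (fun j => x j ≠ y j) := by
        simp [hi]
      have hE : Finset.univ.filter (fun j => x1 j ≠ y j)
          = (Finset.univ.filter (fun j => x j ≠ y j)).erase i := by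
        ext j
        simp only [Finset.mem_filter, Finset.mem_univ, true_and, Finset.mem_erase]
        constructor
        · intro h
          have hji : j ≠ i := by
            rintro rfl; exact h (by simp [hx1, Function.update_self])
          refine ⟨hji, ?_⟩
          rwa [hx1, Function.update_of_ne hji] at h
        · rintro ⟨hji, h⟩
          rwa [hx1, Function.update_of_ne hji]
      rw [hE, Finset.card_erase_of_mem hmem, hd]; omega
    exact hadj.reachable.trans (ih x1 y hstep)

private lemma hamming_reach {n q : ℕ} (x y : Fin n → Fin q) :
    (hammingGraph n (Fin q)).Reachable x y :=
  hamming_reach_aux _ x y rfl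

end MainHelpers

/-- if the product of two nontrivial codes is completely regular in the
product of Hamming graphs, then both factors are completely regular. -/
theorem product_compRegular_implies_factors {n q n' q' : ℕ}
    (C : Set (Fin n → Fin q)) (C' : Set (Fin n' → Fin q'))
    (hCnt : C.Nontrivial ∧ C ≠ Set.univ)
    (hC'nt : C'.Nontrivial ∧ C' ≠ Set.univ)
    (hprod : IsCompRegCode (hammingGraph n (Fin q) □ hammingGraph n' (Fin q')) (C ×ˢ C')) :
    IsCompRegCode (hammingGraph n (Fin q)) C ∧ IsCompRegCode (hammingGraph n' (Fin q')) C' := by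
  obtain ⟨hCn, -⟩ := hCnt
  obtain ⟨hC'n, -⟩ := hC'nt
  obtain ⟨c, hc, -, -, -⟩ := hCn
  obtain ⟨c', hc', -, -, -⟩ := hC'n
  have hG : (hammingGraph n (Fin q)).Connected := by
    haveI : Nonempty (Fin n → Fin q) := ⟨c⟩
    exact ⟨fun x y => hamming_reach x y⟩
  have hH : (hammingGraph n' (Fin q')).Connected := by
    haveI : Nonempty (Fin n' → Fin q') := ⟨c'⟩
    exact ⟨fun x y => hamming_reach x y⟩
  exact ⟨left_factor hG hH ⟨c, hc⟩ hc' hprod, right_factor hG hH hc ⟨c', hc'⟩ hprod⟩
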